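/- arXiv:1404.1728 — 2 statements merged into one kernel-verified Lean document; each statement's English description precedes it below -/
import Mathlib

section
/- Let M1 and M2 be matroids on ground sets E1, E2 with E1 ∩ E2 = {e}, e neither a loop nor a coloop of either matroid, and let f ∈ E1 − e. Then P(M1,M2) − f = P(M1 − f, M2) and P(M1,M2)/f = P(M1/f, M2), where P denotes parallel connection with respect to basepoint e (interpreted via the degenerate conventions if e becomes a loop or coloop of M1 − f or M1/f). -/
open Polynomial

namespace SPPaper

noncomputable section
open Classical

universe u
variable {α : Type u} {V : Type u}

/-- Deletion of a set of elements: `M − X`. -/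
def del (M : Matroid α) (X : Set α) : Matroid α := M.restrict (M.E \ X)

/-- Contraction of a set of elements: `M/X = (M✶ − X)✶`. -/
def con (M : Matroid α) (X : Set α) : Matroid α := (del M.dual X).dual

/-- The rank of a set: the (common) cardinality of maximal independent subsets. -/
def rk (M : Matroid α) (X : Set α) : ℕ :=
  sSup {n | ∃ I, I ⊆ X ∧ M.Indep I ∧ I.ncard = n}

/-- The rank of a matroid. -/
def rank (M : Matroid α) : ℕ := rk M M.E

/-- `e` is a loop of `M` if `{e}` is dependent. -/
def IsLoop (M : Matroid α) (e : α) : Prop := e ∈ M.E ∧ ¬ M.Indep {e}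

/-- A matroid is loopless if it has no loops. -/
def Loopless (M : Matroid α) : Prop := ∀ e, ¬ IsLoop M e

/-- `e` is a coloop of `M` if it lies in every basis. -/
def IsColoop (M : Matroid α) (e : α) : Prop := e ∈ M.E ∧ ∀ B, M.IsBase B → e ∈ B

/-- A circuit of a matroid: a minimal dependent set. -/
def IsCircuit (M : Matroid α) (C : Set α) : Prop := M.Dep C ∧ ∀ D, D ⊂ C → M.Indep D

/-- A matroid is simple if it has no loops and no two-element circuits. -/
def Simple (M : Matroid α) : Prop := Loopless M ∧ ∀ e f : α, ¬ IsCircuit M {e, f}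

/-- `h(M;x) = t(M;x,0)` where `t` is the Tutte polynomial:
`t(M;x,y) = ∑_{A ⊆ E} (x−1)^(r(E)−r(A)) (y−1)^(|A|−r(A))`. -/
def hPoly (M : Matroid α) [Fintype α] : Polynomial ℤ :=
  ∑ A ∈ (Set.toFinite M.E).toFinset.powerset,
    (Polynomial.X - 1) ^ (rank M - rk M (A : Set α)) *
      (-1 : Polynomial ℤ) ^ (A.card - rk M (A : Set α))

/-- The `i`-th entry of the h-vector of the broken circuit complex:
`h(M;x) = ∑_{i=0}^r h_i x^(r−i)`. -/
def hvec (M : Matroid α) [Fintype α] (i : ℕ) : ℤ :=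
  if i ≤ rank M then (hPoly M).coeff (rank M - i) else 0

/-- The beta invariant `β(M) = (−1)^(r(E)) ∑_{A ⊆ E} (−1)^(|A|) r(A)`. -/
def beta (M : Matroid α) [Fintype α] : ℤ :=
  (-1) ^ rank M *
    ∑ A ∈ (Set.toFinite M.E).toFinset.powerset, (-1 : ℤ) ^ A.card * (rk M (A : Set α) : ℤ)

/-- `P` is the direct sum of `M1` and `M2`. -/
def IsDirSumOf (P M1 M2 : Matroid α) : Prop :=
  ∃ h : Disjoint M1.E M2.E, P = Matroid.disjointSum M1 M2 h

/-- A matroid is connected if its ground set is nonempty and it is not the direct sum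
of two matroids on nonempty ground sets. -/
def Connected (M : Matroid α) : Prop :=
  M.E.Nonempty ∧ ¬ ∃ M1 M2 : Matroid α, M1.E.Nonempty ∧ M2.E.Nonempty ∧ IsDirSumOf M M1 M2

/-- `M` is the matroid on ground set `E` whose circuits are exactly the sets satisfying `𝒞`. -/
def HasCircuits (M : Matroid α) (E : Set α) (𝒞 : Set α → Prop) : Prop :=
  M.E = E ∧ ∀ C, IsCircuit M C ↔ 𝒞 C

/-- The circuits of the parallel connection of `M1` and `M2` with basepoint `e`. -/
def PConnCircuit (M1 M2 : Matroid α) (e : α) (C : Set α) : Prop :=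
  IsCircuit M1 C ∨ IsCircuit M2 C ∨
    ∃ C1 C2, IsCircuit M1 C1 ∧ IsCircuit M2 C2 ∧ e ∈ C1 ∧ e ∈ C2 ∧ C = (C1 ∪ C2) \ {e}

/-- The circuits of the series connection of `M1` and `M2` with basepoint `e`. -/
def SConnCircuit (M1 M2 : Matroid α) (e : α) (C : Set α) : Prop :=
  IsCircuit (del M1 {e}) C ∨ IsCircuit (del M2 {e}) C ∨
    ∃ C1 C2, IsCircuit M1 C1 ∧ IsCircuit M2 C2 ∧ e ∈ C1 ∧ e ∈ C2 ∧ C = C1 ∪ C2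

/-- `P` is the parallel connection of `M1` and `M2` with respect to the basepoint `e`
(including the degenerate conventions when `e` is a loop or a coloop). -/
def IsParallelConn (P M1 M2 : Matroid α) (e : α) : Prop :=
  if IsLoop M1 e then IsDirSumOf P M1 (con M2 {e})
  else if IsColoop M1 e then IsDirSumOf P (del M1 {e}) M2
  else if IsLoop M2 e then IsDirSumOf P (con M1 {e}) M2
  else if IsColoop M2 e then IsDirSumOf P M1 (del M2 {e})
  else HasCircuits P (M1.E ∪ M2.E) (PConnCircuit M1 M2 e)

/-- `S` is the series connection of `M1` and `M2` with respect to the basepoint `e`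
(including the degenerate conventions when `e` is a loop or a coloop). -/
def IsSeriesConn (S M1 M2 : Matroid α) (e : α) : Prop :=
  if IsLoop M1 e then IsDirSumOf S (con M1 {e}) M2
  else if IsColoop M1 e then IsDirSumOf S M1 (del M2 {e})
  else if IsLoop M2 e then IsDirSumOf S M1 (con M2 {e})
  else if IsColoop M2 e then IsDirSumOf S (del M1 {e}) M2
  else HasCircuits S (M1.E ∪ M2.E) (SConnCircuit M1 M2 e)

/-- `N` is a two-element circuit. -/
def TwoCircuit (N : Matroid α) : Prop :=
  ∃ e f : α, e ≠ f ∧ N.E = {e, f} ∧ IsCircuit N N.E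

/-- `M` is a series extension of `N`: `M = S(N, C₂)` for a 2-circuit `C₂`. -/
def IsSeriesExtOf (M N : Matroid α) : Prop :=
  ∃ (C : Matroid α) (e : α), TwoCircuit C ∧ N.E ∩ C.E = {e} ∧ IsSeriesConn M N C e

/-- `M` is a parallel extension of `N`: `M = P(N, C₂)` for a 2-circuit `C₂`. -/
def IsParallelExtOf (M N : Matroid α) : Prop :=
  ∃ (C : Matroid α) (e : α), TwoCircuit C ∧ N.E ∩ C.E = {e} ∧ IsParallelConn M N C e

/-- A series-parallel network: a matroid obtainable from a coloop by a sequence of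
series and parallel extensions. -/
inductive IsSPNetwork : Matroid α → Prop
  | coloop (M : Matroid α) (e : α) : M.E = {e} → IsColoop M e → IsSPNetwork M
  | series (M N : Matroid α) : IsSPNetwork N → IsSeriesExtOf M N → IsSPNetwork M
  | parallel (M N : Matroid α) : IsSPNetwork N → IsParallelExtOf M N → IsSPNetwork M

/-- `M` is parallel irreducible at `f`: either `M` is trivial or `M` is not the parallel
connection, with basepoint `f`, of two matroids each having at least two elements. -/
def ParallelIrreducibleAt (M : Matroid α) (f : α) : Prop :=
  M.E.Subsingleton ∨
    ¬ ∃ M1 M2 : Matroid α, M1.E ∩ M2.E = {f} ∧ M1.E.Nontrivial ∧ M2.E.Nontrivial ∧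
        IsParallelConn M M1 M2 f

/-- `M` is parallel irreducible. -/
def ParallelIrreducible (M : Matroid α) : Prop := ∀ f ∈ M.E, ParallelIrreducibleAt M f

/-- `M` is the iterated parallel connection of the list `l` of matroids. -/
inductive IsIterPConn : Matroid α → List (Matroid α) → Prop
  | base (M : Matroid α) : IsIterPConn M [M]
  | step (P M N : Matroid α) (l : List (Matroid α)) (e : α) :
      IsIterPConn P l → P.E ∩ N.E = {e} → IsParallelConn M P N e →
      IsIterPConn M (l ++ [N])

/-- `M` is the cycle matroid of the graph `G` (on the ground set `G.edgeSet`):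
a set of edges is independent iff it contains no cycle. -/
def IsCycleMatroid (M : Matroid (Sym2 V)) (G : SimpleGraph V) : Prop :=
  M.E = G.edgeSet ∧ ∀ X ⊆ M.E, (M.Indep X ↔ (SimpleGraph.fromEdgeSet X).IsAcyclic)

/-- `M` is (isomorphic to) the cycle matroid of the graph `G`. -/
def IsCycleMatroidOf (M : Matroid α) {W : Type} (G : SimpleGraph W) : Prop :=
  ∃ φ : α → Sym2 W, Set.InjOn φ M.E ∧ φ '' M.E = G.edgeSet ∧
    ∀ X ⊆ M.E, (M.Indep X ↔ (SimpleGraph.fromEdgeSet (φ '' X)).IsAcyclic)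

/-- A matroid is graphic if it is isomorphic to the cycle matroid of a graph. -/
def IsGraphic (M : Matroid α) : Prop := ∃ (W : Type) (G : SimpleGraph W), IsCycleMatroidOf M G

/-- A nonempty set of elements, each lying in some circuit, such that every circuit of `M`
containing one of them contains all of them. -/
def SeriesSet (M : Matroid α) (X : Set α) : Prop :=
  X ⊆ M.E ∧ X.Nonempty ∧ (∀ e ∈ X, ∃ C, IsCircuit M C ∧ e ∈ C) ∧
    ∀ C, IsCircuit M C → X ⊆ C ∨ Disjoint X C

/-- A series class: a maximal `SeriesSet`. -/
def SeriesClass (M : Matroid α) (X : Set α) : Prop :=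
  SeriesSet M X ∧ ∀ Y, SeriesSet M Y → X ⊆ Y → X = Y

/-- A removable line of a block `G` (with cycle matroid `M`): a line (a nontrivial path
all of whose internal vertices have degree 2) whose removal (edges together with the
internal vertices) leaves a block. -/
def IsRemovableLine (G : SimpleGraph V) (M : Matroid (Sym2 V)) (X : Set (Sym2 V)) : Prop :=
  ∃ (u v : V) (p : G.Walk u v), p.IsPath ∧ 0 < p.length ∧ X = {e | e ∈ p.edges} ∧
    (∀ w ∈ p.support, w ≠ u → w ≠ v → (G.neighborSet w).ncard = 2) ∧
    ((G.deleteEdges X).induce {w : V | ¬ (w ∈ p.support ∧ w ≠ u ∧ w ≠ v)}).Connected ∧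
    Connected (del M X)

/-- One subdivision step: replace an edge `uv` by a path `u-w-v` through a new vertex `w`. -/
def SubdivStep (G G' : SimpleGraph V) : Prop :=
  ∃ u v w : V, G.Adj u v ∧ w ∉ G.support ∧ w ≠ u ∧ w ≠ v ∧
    G' = SimpleGraph.fromEdgeSet ((G.edgeSet \ {s(u, v)}) ∪ {s(u, w), s(w, v)})

/-- `H` is a subdivision of the complete graph `K₄`. -/
def IsSubdivOfK4 (H : SimpleGraph V) : Prop :=
  ∃ f : Fin 4 ↪ V,
    Relation.ReflTransGen SubdivStep
      (SimpleGraph.fromEdgeSet {s | ∃ i j : Fin 4, i ≠ j ∧ s = s(f i, f j)}) H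


section AuxLemmas
open Set

variable {M N : Matroid α} {C C' X I D : Set α} {e f : α}

lemma IsCircuit.dep (h : IsCircuit M C) : M.Dep C := h.1

lemma IsCircuit.subset_ground (h : IsCircuit M C) : C ⊆ M.E := h.1.subset_ground

lemma IsCircuit.nonempty (h : IsCircuit M C) : C.Nonempty := h.1.nonempty

lemma IsCircuit.eq_of_subset (h : IsCircuit M C) (h' : IsCircuit M C') (hsub : C' ⊆ C) :
    C' = C := by
  by_contra hne
  exact (h.2 C' (ssubset_of_subset_of_ne hsub hne)).not_dep h'.1

lemma exists_circuit_subset (hX : M.Dep X) : ∃ C, C ⊆ X ∧ IsCircuit M C := by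
  obtain ⟨I, hI⟩ := M.exists_isBasis X hX.subset_ground
  have hne : ¬ (X ⊆ I) := fun h => hX.not_indep (hI.indep.subset (h.trans Subset.rfl))
  obtain ⟨e, heX, heI⟩ := not_subset.1 hne
  have hecl : e ∈ M.closure I := hI.subset_closure heX
  set Js : Set (Set α) := {J | J ⊆ I ∧ e ∈ M.closure J} with hJs
  have hIJ : I ∈ Js := ⟨Subset.rfl, hecl⟩
  have hcl : M.closure (⋂₀ Js) = ⋂ J ∈ Js, M.closure J :=
    hI.indep.closure_sInter_eq_biInter_closure_of_forall_subset ⟨I, hIJ⟩ (fun J hJ => hJ.1)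
  set J0 := ⋂₀ Js with hJ0
  have hJ0I : J0 ⊆ I := sInter_subset_of_mem hIJ
  have hJ0i : M.Indep J0 := hI.indep.subset hJ0I
  have heJ0 : e ∈ M.closure J0 := by
    rw [hcl]; exact mem_iInter₂.2 fun J hJ => hJ.2
  have heJ0' : e ∉ J0 := fun h => heI (hJ0I h)
  have heE : e ∈ M.E := hX.subset_ground heX
  refine ⟨insert e J0, insert_subset heX (hJ0I.trans hI.subset), ?_, ?_⟩
  · exact hJ0i.insert_dep_iff.2 ⟨heJ0, heJ0'⟩
  · intro D hD
    by_cases heD : e ∈ D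
    · have hD' : D \ {e} ⊆ J0 := by
        intro x hx
        have := hD.1 hx.1
        rcases this with h | h
        · exact absurd h hx.2
        · exact h
      have hDne : D \ {e} ≠ J0 := by
        intro h
        refine hD.2 (fun x hx => ?_)
        rcases eq_or_ne x e with rfl | hxe
        · exact heD
        · have hxJ0 : x ∈ J0 := by
            rcases (mem_insert_iff.1 hx) with h' | h'
            · exact absurd h' hxe
            · exact h'
          have hxD : x ∈ D \ {e} := h ▸ hxJ0
          exact hxD.1
      obtain ⟨y, hyJ0, hyD⟩ := exists_of_ssubset (ssubset_of_subset_of_ne hD' hDne)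
      have hy : e ∉ M.closure (J0 \ {y}) := by
        intro hmem
        have : J0 \ {y} ∈ Js := ⟨(diff_subset).trans hJ0I, hmem⟩
        have : J0 ⊆ J0 \ {y} := sInter_subset_of_mem this
        exact (this hyJ0).2 rfl
      have hDsub : D \ {e} ⊆ J0 \ {y} := subset_diff_singleton hD' hyD
      have hecl' : e ∉ M.closure (D \ {e}) :=
        fun h => hy (M.closure_subset_closure hDsub h)
      have : M.Indep (insert e (D \ {e})) := by
        rw [(hJ0i.subset hD').insert_indep_iff_of_notMem (fun h => h.2 rfl)]
        exact ⟨heE, hecl'⟩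
      have hDeq : insert e (D \ {e}) = D := by
        rw [insert_diff_singleton, insert_eq_of_mem heD]
      rwa [hDeq] at this
    · have : D ⊆ J0 := by
        intro x hx
        rcases hD.1 hx with h | h
        · exact absurd (h ▸ hx) heD
        · exact h
      exact hJ0i.subset this

lemma dep_iff_exists_circuit (hX : X ⊆ M.E) :
    M.Dep X ↔ ∃ C, C ⊆ X ∧ IsCircuit M C := by
  refine ⟨exists_circuit_subset, fun ⟨C, hCX, hC⟩ => hC.1.superset hCX hX⟩

lemma indep_iff_no_circuit (hX : X ⊆ M.E) :
    M.Indep X ↔ ∀ C, IsCircuit M C → ¬ C ⊆ X := by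
  rw [Matroid.indep_iff_not_dep, dep_iff_exists_circuit hX]
  aesop

lemma ext_circuit (hE : M.E = N.E) (h : ∀ C, IsCircuit M C ↔ IsCircuit N C) : M = N := by
  refine Matroid.ext_indep hE (fun I hIE => ?_)
  rw [indep_iff_no_circuit hIE, indep_iff_no_circuit (hE ▸ hIE)]
  exact ⟨fun H C hC => H C ((h C).2 hC), fun H C hC => H C ((h C).1 hC)⟩

@[simp] lemma del_ground (M : Matroid α) (X : Set α) : (del M X).E = M.E \ X := rfl

@[simp] lemma con_ground (M : Matroid α) (X : Set α) : (con M X).E = M.E \ X := by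
  simp [con, del]

lemma del_indep_iff : (del M X).Indep I ↔ M.Indep I ∧ I ⊆ M.E \ X :=
  Matroid.restrict_indep_iff

lemma del_base_iff : (del M X).IsBase B ↔ M.IsBasis B (M.E \ X) := by
  rw [del, Matroid.isBase_restrict_iff', Matroid.isBasis'_iff_isBasis diff_subset]

lemma circuit_del : IsCircuit (del M X) C ↔ IsCircuit M C ∧ Disjoint C X := by
  constructor
  · rintro ⟨hdep, hmin⟩
    rw [del, Matroid.restrict_dep_iff] at hdep
    have hCE : C ⊆ M.E := hdep.2.trans diff_subset
    refine ⟨⟨Matroid.dep_of_not_indep hdep.1 hCE, fun D hD => ((hmin D hD).of_restrict)⟩,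
      (subset_diff.1 hdep.2).2⟩
  · rintro ⟨⟨hdep, hmin⟩, hdisj⟩
    have hCE : C ⊆ M.E \ X := subset_diff.2 ⟨hdep.subset_ground, hdisj⟩
    refine ⟨by rw [del, Matroid.restrict_dep_iff]; exact ⟨hdep.not_indep, hCE⟩,
      fun D hD => Matroid.restrict_indep_iff.2 ⟨hmin D hD, hD.subset.trans hCE⟩⟩

lemma dual_basis_compl_iff (hf : f ∈ M.E) (hfi : M.Indep {f}) :
    M✶.IsBasis B (M.E \ {f}) ↔ ∃ D, M.IsBase D ∧ f ∈ D ∧ B = M.E \ D := by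
  constructor
  · intro hB
    obtain ⟨Bh, hBh, hBeq⟩ := hB.exists_isBase
    have hBhE : Bh ⊆ M.E := hBh.subset_ground
    have hiff := (hBh.compl_isBase_of_dual).inter_isBasis_iff_compl_inter_isBasis_dual
      (X := {f}) (singleton_subset_iff.2 hf)
    have hcompl : M.E \ (M.E \ Bh) = Bh := diff_diff_cancel_left hBhE
    rw [hcompl] at hiff
    have hbasis : M✶.IsBasis (Bh ∩ (M.E \ {f})) (M.E \ {f}) := hBeq ▸ hB
    have hbf : (M.E \ Bh) ∩ {f} = {f} := by
      have h1 := hiff.2 hbasis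
      exact h1.eq_of_subset_indep hfi inter_subset_right Subset.rfl
    have hfmem : f ∈ (M.E \ Bh) ∩ {f} := by rw [hbf]; exact mem_singleton f
    have hfBh : f ∉ Bh := hfmem.1.2
    refine ⟨M.E \ Bh, hBh.compl_isBase_of_dual, hfmem.1, ?_⟩
    rw [hBeq, hcompl]
    exact inter_eq_self_of_subset_left (subset_diff_singleton hBhE hfBh)
  · rintro ⟨D, hD, hfD, rfl⟩
    have h1 : M.IsBasis (D ∩ {f}) {f} := by
      rw [inter_eq_self_of_subset_right (singleton_subset_iff.2 hfD)]
      exact hfi.isBasis_self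
    have h2 := (hD.inter_isBasis_iff_compl_inter_isBasis_dual (singleton_subset_iff.2 hf)).1 h1
    rwa [inter_eq_self_of_subset_left
      (diff_subset_diff_right (singleton_subset_iff.2 hfD))] at h2

lemma con_base_aux : (con M {f}).Indep I ↔
    I ⊆ M.E \ {f} ∧ ∃ B, M✶.IsBasis B (M.E \ {f}) ∧ Disjoint I B := by
  rw [con, Matroid.dual_indep_iff_exists']
  simp only [del_ground, Matroid.dual_ground]
  have hbi : ∀ B : Set α, (del M✶ {f}).IsBase B ↔ M✶.IsBasis B (M.E \ {f}) := by
    intro B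
    rw [del_base_iff, Matroid.dual_ground]
  constructor
  · rintro ⟨h1, B, hB, h2⟩
    exact ⟨h1, B, (hbi B).1 hB, h2⟩
  · rintro ⟨h1, B, hB, h2⟩
    exact ⟨h1, B, (hbi B).2 hB, h2⟩

lemma con_indep_iff (hf : f ∈ M.E) (hfi : M.Indep {f}) :
    (con M {f}).Indep I ↔ f ∉ I ∧ M.Indep (insert f I) := by
  rw [con_base_aux]
  constructor
  · rintro ⟨hIE, B, hB, hdisj⟩
    obtain ⟨D, hD, hfD, rfl⟩ := (dual_basis_compl_iff hf hfi).1 hB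
    have hID : I ⊆ D := fun x hx =>
      by_contra fun hxD => (hdisj.ne_of_mem hx ⟨(hIE hx).1, hxD⟩) rfl
    exact ⟨fun h => (hIE h).2 rfl, hD.indep.subset (insert_subset hfD hID)⟩
  · rintro ⟨hfI, hins⟩
    obtain ⟨D, hD, hsub⟩ := hins.exists_isBase_superset
    have hIE : I ⊆ M.E \ {f} := subset_diff_singleton
      (fun x hx => hD.subset_ground (hsub (Or.inr hx))) hfI
    refine ⟨hIE, M.E \ D, (dual_basis_compl_iff hf hfi).2 ⟨D, hD, hsub (Or.inl rfl), rfl⟩,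
      disjoint_sdiff_right.mono_left (fun x hx => hsub (Or.inr hx))⟩

lemma con_dep_iff (hf : f ∈ M.E) (hfi : M.Indep {f}) :
    (con M {f}).Dep D ↔ D ⊆ M.E \ {f} ∧ M.Dep (insert f D) := by
  rw [Matroid.dep_iff, con_indep_iff hf hfi, con_ground]
  constructor
  · rintro ⟨h1, h2⟩
    refine ⟨h2, Matroid.dep_of_not_indep (fun hi => h1 ⟨fun hfD => (h2 hfD).2 rfl, hi⟩)
      (insert_subset hf (h2.trans diff_subset))⟩
  · rintro ⟨h1, h2⟩
    exact ⟨fun h => h2.not_indep h.2, h1⟩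

lemma con_eq_del_of_loop (hf : f ∈ M.E) (hfl : ¬ M.Indep {f}) : con M {f} = del M {f} := by
  have hfB : ∀ B, M.IsBase B → f ∉ B := fun B hB hfB => hfl (hB.indep.subset (by simpa))
  have hfBh : ∀ Bh, M✶.IsBase Bh → f ∈ Bh := by
    intro Bh hBh
    by_contra hfBh
    exact (hfB _ hBh.compl_isBase_of_dual) ⟨hf, hfBh⟩
  have hbb : ∀ B : Set α, M✶.IsBasis B (M.E \ {f}) ↔ ∃ Bh, M✶.IsBase Bh ∧ B = Bh \ {f} := by
    intro B
    constructor
    · intro hB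
      obtain ⟨Bh, hBh, hBeq⟩ := hB.exists_isBase
      refine ⟨Bh, hBh, ?_⟩
      rw [hBeq]
      ext x
      simp only [mem_inter_iff, mem_diff, mem_singleton_iff]
      exact ⟨fun h => ⟨h.1, h.2.2⟩, fun h => ⟨h.1, hBh.subset_ground h.1, h.2⟩⟩
    · rintro ⟨Bh, hBh, rfl⟩
      have hfmem : f ∈ Bh := hfBh Bh hBh
      have hind : M✶.Indep (Bh \ {f}) := hBh.indep.subset diff_subset
      rw [Matroid.isBasis_iff (by rw [Matroid.dual_ground]; exact diff_subset)]
      refine ⟨hind, diff_subset_diff_left hBh.subset_ground, fun J hJ hBJ hJE => ?_⟩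
      obtain ⟨_, D, hD, hdisjJD⟩ := Matroid.dual_indep_iff_exists'.1 hJ
      have hfD : f ∉ D := hfB D hD
      have hins : M✶.Indep (insert f J) := Matroid.dual_indep_iff_exists'.2
        ⟨insert_subset hf (hJE.trans diff_subset), D, hD, by
          rw [insert_eq]
          exact Disjoint.union_left (disjoint_singleton_left.2 hfD) hdisjJD⟩
      have hBhsub : Bh ⊆ insert f J := by
        intro x hx
        rcases eq_or_ne x f with rfl | hxf
        · exact Or.inl rfl
        · exact Or.inr (hBJ ⟨hx, hxf⟩)
      have heq : Bh = insert f J := hBh.eq_of_subset_indep hins hBhsub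
      have hfJ : f ∉ J := fun h => (hJE h).2 rfl
      rw [heq, insert_diff_self_of_notMem hfJ]
  refine Matroid.ext_indep (by simp) (fun I hIE => ?_)
  rw [con_ground] at hIE
  rw [con_base_aux, del_indep_iff]
  have hfI : f ∉ I := fun h => (hIE h).2 rfl
  constructor
  · rintro ⟨h1, B, hB, hdisj⟩
    obtain ⟨Bh, hBh, rfl⟩ := (hbb B).1 hB
    have hdisj2 : Disjoint I Bh := by
      rw [Set.disjoint_left]
      intro x hxI hxBh
      rcases eq_or_ne x f with rfl | hxf
      · exact hfI hxI
      · exact (Set.disjoint_left.1 hdisj) hxI ⟨hxBh, hxf⟩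
    have := (Matroid.dual_indep_iff_exists' (M := M✶) (I := I)).2
      ⟨by simpa using h1.trans diff_subset, Bh, hBh, hdisj2⟩
    rw [Matroid.dual_dual] at this
    exact ⟨this, hIE⟩
  · rintro ⟨hI, _⟩
    obtain ⟨D, hD, hsub⟩ := hI.exists_isBase_superset
    refine ⟨hIE, (M.E \ D) \ {f}, (hbb _).2 ⟨M.E \ D, hD.compl_isBase_dual, rfl⟩, ?_⟩
    exact (disjoint_sdiff_right.mono_left hsub).mono_right diff_subset


lemma circuit_con (hf : f ∈ M.E) (hfi : M.Indep {f}) :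
    IsCircuit (con M {f}) C ↔
      (∃ C', IsCircuit M C' ∧ C = C' \ {f}) ∧
      (∀ C', IsCircuit M C' → C' \ {f} ⊆ C → C = C' \ {f}) := by
  have hdepcon : ∀ C', IsCircuit M C' → (con M {f}).Dep (C' \ {f}) := by
    intro C' hC'
    rw [con_dep_iff hf hfi]
    refine ⟨diff_subset_diff_left hC'.subset_ground, hC'.dep.superset ?_
      (insert_subset hf (diff_subset.trans hC'.subset_ground))⟩
    intro x hx
    rcases eq_or_ne x f with rfl | hxf
    · exact Or.inl rfl
    · exact Or.inr ⟨hx, hxf⟩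
  constructor
  · rintro ⟨hdep, hmin⟩
    have hmin' : ∀ C', IsCircuit M C' → C' \ {f} ⊆ C → C = C' \ {f} := by
      intro C' hC' hsub
      by_contra hne
      exact ((hmin _ (ssubset_of_subset_of_ne hsub (Ne.symm hne)))).not_dep (hdepcon C' hC')
    rw [con_dep_iff hf hfi] at hdep
    obtain ⟨C', hC'sub, hC'⟩ := exists_circuit_subset hdep.2
    have hsub : C' \ {f} ⊆ C := by
      intro x hx
      rcases hC'sub hx.1 with h | h
      · exact absurd h hx.2
      · exact h
    exact ⟨⟨C', hC', hmin' C' hC' hsub⟩, hmin'⟩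
  · rintro ⟨⟨C', hC', rfl⟩, hmin⟩
    refine ⟨hdepcon C' hC', fun D hD => ?_⟩
    have hDE : D ⊆ (con M {f}).E := by
      rw [con_ground]
      exact hD.subset.trans (diff_subset_diff_left hC'.subset_ground)
    refine Matroid.indep_of_not_dep (fun hdep => ?_) hDE
    rw [con_dep_iff hf hfi] at hdep
    obtain ⟨C'', hC''sub, hC''⟩ := exists_circuit_subset hdep.2
    have hsub : C'' \ {f} ⊆ D := by
      intro x hx
      rcases hC''sub hx.1 with h | h
      · exact absurd h hx.2
      · exact h
    have := hmin C'' hC'' (hsub.trans hD.subset)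
    exact hD.ne (subset_antisymm hD.subset (this ▸ hsub))

lemma isLoop_iff_circuit : IsLoop M x ↔ IsCircuit M {x} := by
  constructor
  · rintro ⟨hx, hni⟩
    refine ⟨Matroid.dep_of_not_indep hni (singleton_subset_iff.2 hx), fun D hD => ?_⟩
    rw [ssubset_singleton_iff.1 hD]
    exact M.empty_indep
  · rintro ⟨hdep, _⟩
    exact ⟨singleton_subset_iff.1 hdep.subset_ground, hdep.not_indep⟩

lemma isColoop_iff_forall_circuit (he : e ∈ M.E) :
    IsColoop M e ↔ ∀ C, IsCircuit M C → e ∉ C := by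
  constructor
  · rintro ⟨_, hb⟩ C hC heC
    have hCe : C \ {e} ⊂ C := by
      refine ssubset_of_subset_of_ne diff_subset (fun h => ?_)
      have : e ∈ C \ {e} := h.symm ▸ heC
      exact this.2 rfl
    obtain ⟨B, hB, hsub⟩ := (hC.2 _ hCe).exists_isBase_superset
    have hCB : C ⊆ B := by
      intro x hx
      rcases eq_or_ne x e with rfl | hxe
      · exact hb B hB
      · exact hsub ⟨hx, hxe⟩
    exact (hB.indep.subset hCB).not_dep hC.dep
  · intro h
    refine ⟨he, fun B hB => ?_⟩
    by_contra heB
    obtain ⟨C, hCsub, hC⟩ := exists_circuit_subset (hB.insert_dep ⟨he, heB⟩)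
    have heC : e ∈ C := by
      by_contra heC
      have : C ⊆ B := fun x hx => (hCsub hx).resolve_left (fun h => heC (h ▸ hx))
      exact (hB.indep.subset this).not_dep hC.dep
    exact h C hC heC

lemma isColoop_dual_loop : IsColoop M e ↔ IsLoop M✶ e := by
  unfold IsColoop IsLoop
  rw [Matroid.dual_ground]
  refine and_congr_right (fun he => ?_)
  rw [Matroid.dual_indep_iff_exists' ]
  simp only [singleton_subset_iff, he, true_and, not_exists, not_and,
    disjoint_singleton_left, not_not]

lemma isColoop_con_iff (hef : e ≠ f) : IsColoop (con M {f}) e ↔ IsColoop M e := by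
  rw [isColoop_dual_loop, isColoop_dual_loop]
  have : (con M {f})✶ = del M✶ {f} := by rw [con, Matroid.dual_dual]
  rw [this]
  unfold IsLoop
  rw [del_ground, Matroid.dual_ground]
  constructor
  · rintro ⟨he, hni⟩
    refine ⟨he.1, fun hi => hni ?_⟩
    rw [del_indep_iff]
    exact ⟨hi, by rw [Matroid.dual_ground]; exact singleton_subset_iff.2 ⟨he.1, he.2⟩⟩
  · rintro ⟨he, hni⟩
    refine ⟨⟨he, hef⟩, fun hi => hni ?_⟩
    rw [del_indep_iff] at hi
    exact hi.1

lemma circuit_mem_disjointSum {h : Disjoint M.E N.E} (hC : IsCircuit M C) :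
    IsCircuit (Matroid.disjointSum M N h) C := by
  have hCE : C ⊆ M.E := hC.subset_ground
  have hCN : C ∩ N.E = ∅ := by
    rw [← subset_empty_iff]
    intro x hx
    exact (h.ne_of_mem (hCE hx.1) hx.2) rfl
  constructor
  · rw [Matroid.dep_iff]
    refine ⟨fun hi => ?_, by rw [Matroid.disjointSum_ground_eq]; exact hCE.trans subset_union_left⟩
    rw [Matroid.disjointSum_indep_iff] at hi
    rw [inter_eq_self_of_subset_left hCE] at hi
    exact hC.dep.not_indep hi.1
  · intro D hD
    rw [Matroid.disjointSum_indep_iff]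
    have hDC := hD.subset
    refine ⟨by rw [inter_eq_self_of_subset_left (hDC.trans hCE)]; exact hC.2 D hD, ?_, ?_⟩
    · have : D ∩ N.E = ∅ := subset_empty_iff.1 ((inter_subset_inter_left _ hDC).trans hCN.subset)
      rw [this]; exact N.empty_indep
    · exact (hDC.trans hCE).trans subset_union_left

lemma circuit_mem_disjointSum_right {h : Disjoint M.E N.E} (hC : IsCircuit N C) :
    IsCircuit (Matroid.disjointSum M N h) C := by
  have hCE : C ⊆ N.E := hC.subset_ground
  have hCM : C ∩ M.E = ∅ := by
    rw [← subset_empty_iff]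
    intro x hx
    exact (h.symm.ne_of_mem (hCE hx.1) hx.2) rfl
  constructor
  · rw [Matroid.dep_iff]
    refine ⟨fun hi => ?_, by rw [Matroid.disjointSum_ground_eq]; exact hCE.trans subset_union_right⟩
    rw [Matroid.disjointSum_indep_iff] at hi
    rw [inter_eq_self_of_subset_left hCE] at hi
    exact hC.dep.not_indep hi.2.1
  · intro D hD
    rw [Matroid.disjointSum_indep_iff]
    have hDC := hD.subset
    refine ⟨?_, by rw [inter_eq_self_of_subset_left (hDC.trans hCE)]; exact hC.2 D hD, ?_⟩
    · have : D ∩ M.E = ∅ := subset_empty_iff.1 ((inter_subset_inter_left _ hDC).trans hCM.subset)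
      rw [this]; exact M.empty_indep
    · exact (hDC.trans hCE).trans subset_union_right

lemma circuit_disjointSum {h : Disjoint M.E N.E} :
    IsCircuit (Matroid.disjointSum M N h) C ↔ IsCircuit M C ∨ IsCircuit N C := by
  constructor
  · intro hC
    have hCE : C ⊆ M.E ∪ N.E := by
      have := hC.subset_ground
      rwa [Matroid.disjointSum_ground_eq] at this
    have hni := hC.dep.not_indep
    rw [Matroid.disjointSum_indep_iff] at hni
    have : ¬ M.Indep (C ∩ M.E) ∨ ¬ N.Indep (C ∩ N.E) := by tauto
    rcases this with hd | hd
    · have hdep : M.Dep (C ∩ M.E) := Matroid.dep_of_not_indep hd inter_subset_right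
      obtain ⟨C1, hC1sub, hC1⟩ := exists_circuit_subset hdep
      have := hC.eq_of_subset (circuit_mem_disjointSum (h := h) hC1)
        (hC1sub.trans inter_subset_left)
      exact Or.inl (this ▸ hC1)
    · have hdep : N.Dep (C ∩ N.E) := Matroid.dep_of_not_indep hd inter_subset_right
      obtain ⟨C1, hC1sub, hC1⟩ := exists_circuit_subset hdep
      have hC1' : IsCircuit (Matroid.disjointSum M N h) C1 :=
        circuit_mem_disjointSum_right hC1
      have := hC.eq_of_subset hC1' (hC1sub.trans inter_subset_left)
      exact Or.inr (this ▸ hC1)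
  · rintro (hC | hC)
    · exact circuit_mem_disjointSum hC
    · exact circuit_mem_disjointSum_right hC


lemma set_identity1 {e f : α} {C1 C2 : Set α} (hf : f ∉ C2) :
    ((C1 ∪ C2) \ {e}) \ {f} = ((C1 \ {f}) ∪ C2) \ {e} := by
  ext x
  have hx2 : x ∈ C2 → x ≠ f := fun h1 h2 => hf (h2 ▸ h1)
  simp only [mem_diff, mem_union, mem_singleton_iff]
  tauto

lemma set_identity2 {e f : α} {C2 : Set α} (hf : f ∉ C2) :
    ((({e, f} : Set α) ∪ C2) \ {e}) \ {f} = C2 \ {e} := by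
  ext x
  have hx2 : x ∈ C2 → x ≠ f := fun h1 h2 => hf (h2 ▸ h1)
  simp only [mem_diff, mem_union, mem_singleton_iff, mem_insert_iff]
  tauto

end AuxLemmas

/-- for `f ∈ E1 − e`, `P(M1,M2) − f = P(M1 − f, M2)` and
`P(M1,M2)/f = P(M1/f, M2)` (with the degenerate conventions built into
`IsParallelConn`). -/
theorem stmt5 (M1 M2 P : Matroid α) (e : α)
    (hE : M1.E ∩ M2.E = {e})
    (hl1 : ¬ IsLoop M1 e) (hc1 : ¬ IsColoop M1 e)
    (hl2 : ¬ IsLoop M2 e) (hc2 : ¬ IsColoop M2 e)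
    (hP : IsParallelConn P M1 M2 e)
    (f : α) (hf : f ∈ M1.E) (hfe : f ≠ e) :
    IsParallelConn (del P {f}) (del M1 {f}) M2 e ∧
    IsParallelConn (con P {f}) (con M1 {f}) M2 e := by
  have hInt : ∀ x, x ∈ M1.E → x ∈ M2.E → x = e := by
    intro x h1 h2
    have hx : x ∈ M1.E ∩ M2.E := ⟨h1, h2⟩
    rw [hE] at hx
    exact hx
  have heM : e ∈ M1.E ∩ M2.E := by rw [hE]; exact Set.mem_singleton e
  have heM1 : e ∈ M1.E := heM.1
  have heM2 : e ∈ M2.E := heM.2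
  have hfM2 : f ∉ M2.E := fun h => hfe (hInt f hf h)
  have h1e : M1.Indep {e} := by
    by_contra h; exact hl1 ⟨heM1, h⟩
  have h2e : M2.Indep {e} := by
    by_contra h; exact hl2 ⟨heM2, h⟩
  rw [IsParallelConn, if_neg hl1, if_neg hc1, if_neg hl2, if_neg hc2] at hP
  obtain ⟨hPE, hPcirc⟩ := hP
  have hCe1 : ¬ IsCircuit M1 {e} := fun h => hl1 (isLoop_iff_circuit.2 h)
  have hCe2 : ¬ IsCircuit M2 {e} := fun h => hl2 (isLoop_iff_circuit.2 h)
  have hC2f : ∀ C, IsCircuit M2 C → f ∉ C := fun C hC hfC => hfM2 (hC.subset_ground hfC)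
  have hC2singleton : ∀ C2, IsCircuit M2 C2 → C2 ⊆ {e} → False := by
    intro C2 hC2 hsub
    obtain ⟨x, hx⟩ := hC2.nonempty
    have hxe : x = e := hsub hx
    subst hxe
    have : C2 = {x} := Set.Subset.antisymm hsub (Set.singleton_subset_iff.2 hx)
    exact hCe2 (this ▸ hC2)
  -- ground set computation shared by del and con cases
  have hground : (M1.E ∪ M2.E) \ {f} = (M1.E \ {f}) ∪ M2.E := by
    ext x
    simp only [Set.mem_diff, Set.mem_union, Set.mem_singleton_iff]
    constructor
    · rintro ⟨h1 | h1, hxf⟩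
      · exact Or.inl ⟨h1, hxf⟩
      · exact Or.inr h1
    · rintro (⟨h1, hxf⟩ | h1)
      · exact ⟨Or.inl h1, hxf⟩
      · exact ⟨Or.inr h1, fun hh => hfM2 (hh ▸ h1)⟩
  have hne_loop_del : ¬ IsLoop (del M1 {f}) e := by
    rintro ⟨_, hni⟩
    exact hni (del_indep_iff.2 ⟨h1e, Set.singleton_subset_iff.2 ⟨heM1, fun h => hfe (Set.mem_singleton_iff.1 h).symm⟩⟩)
  have hPdel_circ : ∀ C, IsCircuit (del P {f}) C ↔ (PConnCircuit M1 M2 e C ∧ f ∉ C) := by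
    intro C
    rw [circuit_del, hPcirc C, Set.disjoint_singleton_right]
  have Hdel : IsParallelConn (del P {f}) (del M1 {f}) M2 e := by
    by_cases hco : IsColoop (del M1 {f}) e
    · -- degenerate: e is a coloop of M1 - f
      rw [IsParallelConn, if_neg hne_loop_del, if_pos hco]
      have heDelE : e ∈ (del M1 {f}).E := ⟨heM1, fun h => hfe (Set.mem_singleton_iff.1 h).symm⟩
      have hnoC : ∀ C, IsCircuit (del M1 {f}) C → e ∉ C :=
        (isColoop_iff_forall_circuit heDelE).1 hco
      have hdisj : Disjoint (del (del M1 {f}) {e}).E M2.E := by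
        rw [del_ground, del_ground, Set.disjoint_left]
        rintro x ⟨⟨hx1, _⟩, hxe⟩ hx2
        exact hxe (hInt x hx1 hx2)
      refine ⟨hdisj, ext_circuit ?_ ?_⟩
      · rw [del_ground, hPE, Matroid.disjointSum_ground_eq, del_ground, del_ground]
        ext x
        simp only [Set.mem_diff, Set.mem_union, Set.mem_singleton_iff]
        constructor
        · rintro ⟨h1 | h1, hxf⟩
          · by_cases hxe : x = e
            · exact Or.inr (hxe ▸ heM2)
            · exact Or.inl ⟨⟨h1, hxf⟩, hxe⟩
          · exact Or.inr h1
        · rintro (⟨⟨h1, hxf⟩, _⟩ | h1)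
          · exact ⟨Or.inl h1, hxf⟩
          · exact ⟨Or.inr h1, fun hxf => hfM2 (hxf ▸ h1)⟩
      · intro C
        rw [circuit_disjointSum, circuit_del (M := del M1 {f}), circuit_del (M := M1),
          hPdel_circ C]
        unfold PConnCircuit
        constructor
        · rintro ⟨h | h | ⟨C1, C2, hC1, hC2, heC1, heC2, rfl⟩, hfC⟩
          · left
            have hd : Disjoint C {f} := Set.disjoint_singleton_right.2 hfC
            have heC : e ∉ C := hnoC C (circuit_del.2 ⟨h, hd⟩)
            exact ⟨⟨h, hd⟩, Set.disjoint_singleton_right.2 heC⟩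
          · exact Or.inr h
          · exfalso
            have hfC1 : f ∉ C1 := fun hh => hfC ⟨Or.inl hh, fun h' => hfe h'⟩
            exact hnoC C1
              (circuit_del.2 ⟨hC1, Set.disjoint_singleton_right.2 hfC1⟩) heC1
        · rintro (⟨⟨h, hd⟩, _⟩ | h)
          · exact ⟨Or.inl h, Set.disjoint_singleton_right.1 hd⟩
          · exact ⟨Or.inr (Or.inl h), hC2f C h⟩
    · -- generic deletion case
      rw [IsParallelConn, if_neg hne_loop_del, if_neg hco, if_neg hl2, if_neg hc2]
      refine ⟨by rw [del_ground, del_ground, hPE]; exact hground, fun C => ?_⟩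
      rw [hPdel_circ C]
      unfold PConnCircuit
      constructor
      · rintro ⟨h | h | ⟨C1, C2, hC1, hC2, he1, he2, rfl⟩, hfC⟩
        · exact Or.inl (circuit_del.2 ⟨h, Set.disjoint_singleton_right.2 hfC⟩)
        · exact Or.inr (Or.inl h)
        · have hfC1 : f ∉ C1 := fun hh => hfC ⟨Or.inl hh, fun h' => hfe h'⟩
          exact Or.inr (Or.inr ⟨C1, C2,
            circuit_del.2 ⟨hC1, Set.disjoint_singleton_right.2 hfC1⟩, hC2, he1, he2, rfl⟩)
      · rintro (h | h | ⟨C1, C2, hC1, hC2, he1, he2, rfl⟩)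
        · rw [circuit_del] at h
          exact ⟨Or.inl h.1, Set.disjoint_singleton_right.1 h.2⟩
        · exact ⟨Or.inr (Or.inl h), hC2f C h⟩
        · rw [circuit_del] at hC1
          refine ⟨Or.inr (Or.inr ⟨C1, C2, hC1.1, hC2, he1, he2, rfl⟩), ?_⟩
          rintro ⟨h1 | h1, -⟩
          · exact Set.disjoint_singleton_right.1 hC1.2 h1
          · exact hC2f C2 hC2 h1
  refine ⟨Hdel, ?_⟩
  by_cases hfl : M1.Indep {f}
  case neg =>
    have hfP : f ∈ P.E := by rw [hPE]; exact Or.inl hf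
    have hCf1 : IsCircuit M1 {f} := isLoop_iff_circuit.1 ⟨hf, hfl⟩
    have hPd : ¬ P.Indep {f} := ((hPcirc {f}).2 (Or.inl hCf1)).dep.not_indep
    rw [con_eq_del_of_loop hf hfl, con_eq_del_of_loop hfP hPd]
    exact Hdel
  case pos =>
    have hfP : f ∈ P.E := by rw [hPE]; exact Or.inl hf
    have hPfi : P.Indep {f} := by
      rw [indep_iff_no_circuit (Set.singleton_subset_iff.2 hfP)]
      intro C hC hsub
      have hCf : C = {f} := Set.Subset.antisymm hsub
        (Set.singleton_subset_iff.2 (by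
          obtain ⟨x, hx⟩ := hC.nonempty
          have hx' := hsub hx
          rwa [Set.mem_singleton_iff.1 hx'] at hx))
      subst hCf
      rcases (hPcirc {f}).1 hC with h | h | ⟨C1, C2, hC1, hC2, he1, he2, heq⟩
      · exact h.dep.not_indep hfl
      · exact hfM2 (h.subset_ground rfl)
      · refine hC2singleton C2 hC2 (fun x hx => ?_)
        by_contra hxe
        have hxm : x ∈ ({f} : Set α) := by rw [heq]; exact ⟨Or.inr hx, hxe⟩
        have hxf : x = f := Set.mem_singleton_iff.1 hxm
        exact hfM2 (hxf ▸ hC2.subset_ground hx)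
    have hM1con : ∀ C, IsCircuit (con M1 {f}) C ↔
        (∃ C', IsCircuit M1 C' ∧ C = C' \ {f}) ∧
        (∀ C', IsCircuit M1 C' → C' \ {f} ⊆ C → C = C' \ {f}) :=
      fun C => circuit_con hf hfl
    have hPcon : ∀ C, IsCircuit (con P {f}) C ↔
        (∃ C', IsCircuit P C' ∧ C = C' \ {f}) ∧
        (∀ C', IsCircuit P C' → C' \ {f} ⊆ C → C = C' \ {f}) :=
      fun C => circuit_con hfP hPfi
    have hfrag : ∀ C1, IsCircuit M1 C1 → ∃ D1, IsCircuit (con M1 {f}) D1 ∧ D1 ⊆ C1 \ {f} := by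
      intro C1 hC1
      have hdep : (con M1 {f}).Dep (C1 \ {f}) := by
        rw [con_dep_iff hf hfl]
        refine ⟨Set.diff_subset_diff_left hC1.subset_ground, hC1.dep.superset ?_
          (Set.insert_subset hf (Set.diff_subset.trans hC1.subset_ground))⟩
        intro x hx
        rcases eq_or_ne x f with rfl | hxf
        · exact Or.inl rfl
        · exact Or.inr ⟨hx, hxf⟩
      obtain ⟨D1, h1, h2⟩ := exists_circuit_subset hdep
      exact ⟨D1, h2, h1⟩
    have hmix_sp : ∀ C2, IsCircuit M2 C2 → e ∈ C2 → IsCircuit M1 {e, f} →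
        ∃ C', IsCircuit P C' ∧ C2 \ {e} = C' \ {f} := by
      intro C2 hC2 heC2 hef
      refine ⟨({e, f} ∪ C2) \ {e}, (hPcirc _).2 (Or.inr (Or.inr
        ⟨{e, f}, C2, hef, hC2, Or.inl rfl, heC2, rfl⟩)), ?_⟩
      rw [set_identity2 (hC2f C2 hC2)]
    by_cases hef : IsCircuit M1 {e, f}
    · -- degenerate case : e is a loop of M1 / f
      have hLe : IsLoop (con M1 {f}) e := by
        refine ⟨⟨heM1, fun h => hfe (Set.mem_singleton_iff.1 h).symm⟩, fun hi => ?_⟩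
        rw [con_indep_iff hf hfl] at hi
        refine hef.dep.not_indep ?_
        have hpc : ({f, e} : Set α) = {e, f} := Set.pair_comm f e
        exact hpc ▸ hi.2
      rw [IsParallelConn, if_pos hLe]
      have hdisj : Disjoint (con M1 {f}).E (con M2 {e}).E := by
        rw [con_ground, con_ground, Set.disjoint_left]
        rintro x ⟨hx1, _⟩ ⟨hx2, hxe⟩
        exact hxe (Set.mem_singleton_iff.2 (hInt x hx1 hx2))
      have hM2con : ∀ C, IsCircuit (con M2 {e}) C ↔
          (∃ C', IsCircuit M2 C' ∧ C = C' \ {e}) ∧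
          (∀ C', IsCircuit M2 C' → C' \ {e} ⊆ C → C = C' \ {e}) :=
        fun C => circuit_con heM2 h2e
      have hmin2 : ∀ C, (∀ C', IsCircuit P C' → C' \ {f} ⊆ C → C = C' \ {f}) →
          ∀ C2', IsCircuit M2 C2' → C2' \ {e} ⊆ C → C = C2' \ {e} := by
        intro C hmin C2' hC2' hsub
        by_cases he' : e ∈ C2'
        · obtain ⟨X', hX', hXeq⟩ := hmix_sp C2' hC2' he' hef
          rw [hXeq] at hsub ⊢
          exact hmin X' hX' hsub
        · have h1 : C2' \ {e} = C2' := Set.diff_singleton_eq_self he'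
          have h2 : C2' \ {f} = C2' := Set.diff_singleton_eq_self (hC2f _ hC2')
          rw [h1, ← h2] at hsub ⊢
          exact hmin C2' ((hPcirc _).2 (Or.inr (Or.inl hC2'))) hsub
      refine ⟨hdisj, ext_circuit ?_ ?_⟩
      · rw [con_ground, hPE, Matroid.disjointSum_ground_eq, con_ground, con_ground]
        ext x
        simp only [Set.mem_diff, Set.mem_union, Set.mem_singleton_iff]
        constructor
        · rintro ⟨h1 | h1, hxf⟩
          · exact Or.inl ⟨h1, hxf⟩
          · by_cases hxe : x = e
            · exact Or.inl ⟨hxe ▸ heM1, hxf⟩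
            · exact Or.inr ⟨h1, hxe⟩
        · rintro (⟨h1, hxf⟩ | ⟨h1, _⟩)
          · exact ⟨Or.inl h1, hxf⟩
          · exact ⟨Or.inr h1, fun hh => hfM2 (hh ▸ h1)⟩
      · intro C
        rw [circuit_disjointSum, hPcon C]
        constructor
        · rintro ⟨⟨C', hC', rfl⟩, hmin⟩
          rcases (hPcirc C').1 hC' with h1 | h2 | ⟨C1, C2, hC1, hC2, he1, he2, rfl⟩
          · left
            rw [hM1con]
            exact ⟨⟨C', h1, rfl⟩, fun C1 hC1 hsub =>
              hmin C1 ((hPcirc C1).2 (Or.inl hC1)) hsub⟩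
          · have hfC' := hC2f C' h2
            have hCeq : C' \ {f} = C' := Set.diff_singleton_eq_self hfC'
            by_cases he' : e ∈ C'
            · exfalso
              obtain ⟨X', hX', hXeq⟩ := hmix_sp C' h2 he' hef
              have hsub : X' \ {f} ⊆ C' \ {f} := by
                rw [← hXeq, hCeq]
                exact Set.diff_subset
              have hq := hmin X' hX' hsub
              rw [← hXeq] at hq
              have hmem : e ∈ C' \ {f} :=
                ⟨he', fun hh => hfe (Set.mem_singleton_iff.1 hh).symm⟩
              rw [hq] at hmem
              exact hmem.2 rfl
            · right
              rw [hM2con]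
              exact ⟨⟨C', h2, by rw [hCeq, Set.diff_singleton_eq_self he']⟩,
                hmin2 _ hmin⟩
          · have hfC2 := hC2f C2 hC2
            obtain ⟨X', hX', hXeq⟩ := hmix_sp C2 hC2 he2 hef
            have hsub : X' \ {f} ⊆ ((C1 ∪ C2) \ {e}) \ {f} := by
              rw [← hXeq]
              intro x hx
              exact ⟨⟨Or.inr hx.1, hx.2⟩, fun hh => hfC2 (by
                rw [Set.mem_singleton_iff.1 hh] at hx
                exact hx.1)⟩
            have hCeq := hmin X' hX' hsub
            rw [← hXeq] at hCeq
            right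
            rw [hM2con]
            exact ⟨⟨C2, hC2, hCeq⟩, hmin2 _ hmin⟩
        · rintro (h | h)
          · obtain ⟨⟨C1, hC1, rfl⟩, hmin1⟩ := (hM1con _).1 h
            refine ⟨⟨C1, (hPcirc _).2 (Or.inl hC1), rfl⟩, ?_⟩
            intro C' hC' hsub
            rcases (hPcirc C').1 hC' with h1 | h2 | ⟨C1', C2', hC1', hC2', he1', he2', rfl⟩
            · exact hmin1 C' h1 hsub
            · exfalso
              refine hC2singleton C' h2 (fun x hx => ?_)
              have hxC : x ∈ C1 \ {f} := hsub ⟨hx, fun hh => hC2f C' h2 (by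
                rwa [Set.mem_singleton_iff.1 hh] at hx)⟩
              exact Set.mem_singleton_iff.2
                (hInt x (hC1.subset_ground hxC.1) (h2.subset_ground hx))
            · exfalso
              refine hC2singleton C2' hC2' (fun x hx => ?_)
              by_contra hxe
              have hxY : x ∈ ((C1' ∪ C2') \ {e}) \ {f} :=
                ⟨⟨Or.inr hx, hxe⟩, fun hh => hC2f C2' hC2' (by
                  rwa [Set.mem_singleton_iff.1 hh] at hx)⟩
              have hxC := hsub hxY
              exact hxe (Set.mem_singleton_iff.2
                (hInt x (hC1.subset_ground hxC.1) (hC2'.subset_ground hx)))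
          · obtain ⟨⟨C2, hC2, rfl⟩, hmin2e⟩ := (hM2con _).1 h
            have hfC2 := hC2f C2 hC2
            constructor
            · by_cases he' : e ∈ C2
              · exact hmix_sp C2 hC2 he' hef
              · exact ⟨C2, (hPcirc _).2 (Or.inr (Or.inl hC2)),
                  by rw [Set.diff_singleton_eq_self he', Set.diff_singleton_eq_self hfC2]⟩
            · intro C' hC' hsub
              rcases (hPcirc C').1 hC' with h1 | h2 | ⟨C1', C2', hC1', hC2', he1', he2', rfl⟩
              · exfalso
                have hsubf : C' ⊆ {f} := by
                  intro x hx
                  by_contra hxf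
                  have hxC : x ∈ C2 \ {e} := hsub ⟨hx, hxf⟩
                  have hxe : x = e :=
                    hInt x (h1.subset_ground hx) (hC2.subset_ground hxC.1)
                  exact hxC.2 (Set.mem_singleton_iff.2 hxe)
                obtain ⟨x, hx⟩ := h1.nonempty
                have hxf := Set.mem_singleton_iff.1 (hsubf hx)
                rw [hxf] at hx
                have hC'eq : C' = {f} :=
                  Set.Subset.antisymm hsubf (Set.singleton_subset_iff.2 hx)
                exact (hC'eq ▸ h1).dep.not_indep hfl
              · have hfC' := hC2f C' h2
                have heC' : e ∉ C' := by
                  intro he'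
                  have hm := hsub ⟨he', fun hh => hfe (Set.mem_singleton_iff.1 hh).symm⟩
                  exact hm.2 rfl
                have hq := hmin2e C' h2 (by
                  rwa [Set.diff_singleton_eq_self heC', ← Set.diff_singleton_eq_self hfC'])
                rw [hq, Set.diff_singleton_eq_self heC', Set.diff_singleton_eq_self hfC']
              · have hfC2' := hC2f C2' hC2'
                have hC1'sub : ∀ x ∈ C1', x = e ∨ x = f := by
                  intro x hx
                  by_contra hcon
                  push_neg at hcon
                  have hxC : x ∈ C2 \ {e} := hsub ⟨⟨Or.inl hx,
                    fun hh => hcon.1 (Set.mem_singleton_iff.1 hh)⟩,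
                    fun hh => hcon.2 (Set.mem_singleton_iff.1 hh)⟩
                  exact hcon.1 (hInt x (hC1'.subset_ground hx) (hC2.subset_ground hxC.1))
                have hYeq : ((C1' ∪ C2') \ {e}) \ {f} = C2' \ {e} := by
                  ext x
                  simp only [Set.mem_diff, Set.mem_union, Set.mem_singleton_iff]
                  constructor
                  · rintro ⟨⟨hx | hx, hxe⟩, hxf⟩
                    · rcases hC1'sub x hx with h' | h'
                      · exact absurd h' hxe
                      · exact absurd h' hxf
                    · exact ⟨hx, hxe⟩
                  · rintro ⟨hx, hxe⟩
                    exact ⟨⟨Or.inr hx, hxe⟩, fun hh => hfC2' (hh ▸ hx)⟩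
                have hq := hmin2e C2' hC2' (by rw [← hYeq]; exact hsub)
                rw [hq, hYeq]
    · -- generic contraction case
      have hIndep_ef : M1.Indep {e, f} := by
        rw [indep_iff_no_circuit (by
          intro x hx
          rcases hx with rfl | hx
          · exact heM1
          · rw [Set.mem_singleton_iff.1 hx]; exact hf)]
        intro C hC hsub
        by_cases heC : e ∈ C <;> by_cases hfC : f ∈ C
        · refine hef ?_
          have hCeq : C = {e, f} := Set.Subset.antisymm hsub
            (Set.insert_subset heC (Set.singleton_subset_iff.2 hfC))
          exact hCeq ▸ hC
        · refine hCe1 ?_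
          have hCeq : C = {e} := Set.Subset.antisymm (fun x hx => by
            rcases hsub hx with h | h
            · exact h
            · exact absurd (by rwa [Set.mem_singleton_iff.1 h] at hx) hfC)
            (Set.singleton_subset_iff.2 heC)
          exact hCeq ▸ hC
        · have hCeq : C = {f} := Set.Subset.antisymm (fun x hx => by
            rcases hsub hx with h | h
            · exact absurd (h ▸ hx) heC
            · exact h) (Set.singleton_subset_iff.2 hfC)
          exact (hCeq ▸ hC).dep.not_indep hfl
        · obtain ⟨x, hx⟩ := hC.nonempty
          rcases hsub hx with h | h
          · exact heC (h ▸ hx)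
          · exact hfC (by rwa [Set.mem_singleton_iff.1 h] at hx)
      have hM1nsub : ∀ C1, IsCircuit M1 C1 → ¬ C1 ⊆ {e, f} :=
        fun C1 h hsub => h.dep.not_indep (hIndep_ef.subset hsub)
      have hLe_false : ¬ IsLoop (con M1 {f}) e := by
        rintro ⟨_, hni⟩
        refine hni ((con_indep_iff hf hfl).2
          ⟨fun h => hfe (Set.mem_singleton_iff.1 h), ?_⟩)
        have hpc : ({f, e} : Set α) = {e, f} := Set.pair_comm f e
        rw [show (insert f {e} : Set α) = {f, e} from rfl, hpc]
        exact hIndep_ef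
      have hCo_false : ¬ IsColoop (con M1 {f}) e :=
        fun h => hc1 ((isColoop_con_iff (Ne.symm hfe)).1 h)
      rw [IsParallelConn, if_neg hLe_false, if_neg hCo_false, if_neg hl2, if_neg hc2]
      refine ⟨by rw [con_ground, con_ground, hPE]; exact hground, fun C => ?_⟩
      rw [hPcon C]
      unfold PConnCircuit
      constructor
      · rintro ⟨⟨C', hC', rfl⟩, hmin⟩
        rcases (hPcirc C').1 hC' with h1 | h2 | ⟨C1, C2, hC1, hC2, he1, he2, rfl⟩
        · left
          rw [hM1con]
          exact ⟨⟨C', h1, rfl⟩, fun C1 hC1 hsub =>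
            hmin C1 ((hPcirc C1).2 (Or.inl hC1)) hsub⟩
        · right; left
          have hfC' := hC2f C' h2
          rw [Set.diff_singleton_eq_self hfC']
          exact h2
        · obtain ⟨D1, hD1, hD1sub⟩ := hfrag C1 hC1
          have hfC2 := hC2f C2 hC2
          obtain ⟨⟨C1'', hC1'', hD1eq⟩, _⟩ := (hM1con D1).1 hD1
          by_cases heD1 : e ∈ D1
          · right; right
            have heC1'' : e ∈ C1'' := by
              have hm := hD1eq ▸ heD1
              exact hm.1
            have hXcirc : IsCircuit P ((C1'' ∪ C2) \ {e}) :=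
              (hPcirc _).2 (Or.inr (Or.inr ⟨C1'', C2, hC1'', hC2, heC1'', he2, rfl⟩))
            have hXsub : ((C1'' ∪ C2) \ {e}) \ {f} ⊆ ((C1 ∪ C2) \ {e}) \ {f} := by
              rw [set_identity1 hfC2, set_identity1 hfC2, ← hD1eq]
              intro x hx
              rcases hx.1 with h' | h'
              · exact ⟨Or.inl (hD1sub h'), hx.2⟩
              · exact ⟨Or.inr h', hx.2⟩
            have hCeq := hmin _ hXcirc hXsub
            refine ⟨D1, C2, hD1, hC2, heD1, he2, ?_⟩
            rw [hCeq, set_identity1 hfC2, ← hD1eq]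
          · left
            have hD1subC : D1 ⊆ ((C1 ∪ C2) \ {e}) \ {f} := by
              intro x hx
              have h' := hD1sub hx
              exact ⟨⟨Or.inl h'.1, fun hh => heD1 (by
                rwa [Set.mem_singleton_iff.1 hh] at hx)⟩, h'.2⟩
            have hCeq := hmin C1'' ((hPcirc _).2 (Or.inl hC1''))
              (by rw [← hD1eq]; exact hD1subC)
            rw [hCeq, ← hD1eq]
            exact hD1
      · rintro (h | h | ⟨D1, C2, hD1, hC2, heD1, heC2, rfl⟩)
        · obtain ⟨⟨C1, hC1, rfl⟩, hmin1⟩ := (hM1con _).1 h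
          refine ⟨⟨C1, (hPcirc _).2 (Or.inl hC1), rfl⟩, ?_⟩
          intro C' hC' hsub
          rcases (hPcirc C').1 hC' with h1 | h2 | ⟨C1', C2', hC1', hC2', he1', he2', rfl⟩
          · exact hmin1 C' h1 hsub
          · exfalso
            refine hC2singleton C' h2 (fun x hx => ?_)
            have hxC : x ∈ C1 \ {f} := hsub ⟨hx, fun hh => hC2f C' h2 (by
              rwa [Set.mem_singleton_iff.1 hh] at hx)⟩
            exact Set.mem_singleton_iff.2
              (hInt x (hC1.subset_ground hxC.1) (h2.subset_ground hx))
          · exfalso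
            refine hC2singleton C2' hC2' (fun x hx => ?_)
            by_contra hxe
            have hxY : x ∈ ((C1' ∪ C2') \ {e}) \ {f} :=
              ⟨⟨Or.inr hx, hxe⟩, fun hh => hC2f C2' hC2' (by
                rwa [Set.mem_singleton_iff.1 hh] at hx)⟩
            have hxC := hsub hxY
            exact hxe (Set.mem_singleton_iff.2
              (hInt x (hC1.subset_ground hxC.1) (hC2'.subset_ground hx)))
        · have hfC := hC2f C h
          refine ⟨⟨C, (hPcirc _).2 (Or.inr (Or.inl h)),
            (Set.diff_singleton_eq_self hfC).symm⟩, ?_⟩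
          intro C' hC' hsub
          rcases (hPcirc C').1 hC' with h1 | h2 | ⟨C1', C2', hC1', hC2', he1', he2', rfl⟩
          · exfalso
            refine hM1nsub C' h1 (fun x hx => ?_)
            by_cases hxf : x = f
            · exact Set.mem_insert_iff.2 (Or.inr (Set.mem_singleton_iff.2 hxf))
            · have hxC := hsub ⟨hx, fun hh => hxf (Set.mem_singleton_iff.1 hh)⟩
              exact Set.mem_insert_iff.2
                (Or.inl (hInt x (h1.subset_ground hx) (h.subset_ground hxC)))
          · have hfC' := hC2f C' h2
            rw [Set.diff_singleton_eq_self hfC'] at hsub ⊢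
            exact (h.eq_of_subset h2 hsub).symm
          · exfalso
            refine hM1nsub C1' hC1' (fun x hx => ?_)
            by_cases hxe : x = e
            · exact Set.mem_insert_iff.2 (Or.inl hxe)
            by_cases hxf : x = f
            · exact Set.mem_insert_iff.2 (Or.inr (Set.mem_singleton_iff.2 hxf))
            have hxY : x ∈ ((C1' ∪ C2') \ {e}) \ {f} :=
              ⟨⟨Or.inl hx, fun hh => hxe (Set.mem_singleton_iff.1 hh)⟩,
                fun hh => hxf (Set.mem_singleton_iff.1 hh)⟩
            have hxC := hsub hxY
            exact absurd (hInt x (hC1'.subset_ground hx) (h.subset_ground hxC)) hxe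
        · obtain ⟨⟨C1, hC1, hD1eq⟩, hmin1⟩ := (hM1con D1).1 hD1
          have heC1 : e ∈ C1 := by
            have hm := hD1eq ▸ heD1
            exact hm.1
          have hfC2 := hC2f C2 hC2
          have hD1E : D1 ⊆ M1.E \ {f} := by
            have hg := hD1.subset_ground
            rwa [con_ground] at hg
          constructor
          · exact ⟨(C1 ∪ C2) \ {e}, (hPcirc _).2 (Or.inr (Or.inr
              ⟨C1, C2, hC1, hC2, heC1, heC2, rfl⟩)),
              by rw [set_identity1 hfC2, ← hD1eq]⟩
          · intro C' hC' hsub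
            have hCsubM1 : ∀ x, x ∈ (D1 ∪ C2) \ {e} → x ∈ M1.E → x ∈ D1 \ {e} := by
              intro x hx hxM1
              rcases hx.1 with h' | h'
              · exact ⟨h', hx.2⟩
              · exact absurd (Set.mem_singleton_iff.2
                  (hInt x hxM1 (hC2.subset_ground h'))) hx.2
            have hCsubM2 : ∀ x, x ∈ (D1 ∪ C2) \ {e} → x ∈ M2.E → x ∈ C2 \ {e} := by
              intro x hx hxM2
              rcases hx.1 with h' | h'
              · exact absurd (Set.mem_singleton_iff.2
                  (hInt x (hD1E h').1 hxM2)) hx.2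
              · exact ⟨h', hx.2⟩
            rcases (hPcirc C').1 hC' with h1 | h2 | ⟨C1', C2', hC1', hC2', he1', he2', rfl⟩
            · exfalso
              have hY : C' \ {f} ⊆ D1 := fun x hx =>
                (hCsubM1 x (hsub hx) (h1.subset_ground hx.1)).1
              have hq := hmin1 C' h1 hY
              have heY : e ∈ C' \ {f} := by rw [← hq]; exact heD1
              exact (hCsubM1 e (hsub heY) heM1).2 rfl
            · exfalso
              have hY : C' ⊆ C2 \ {e} := by
                intro x hx
                have hx' : x ∈ C' \ {f} := ⟨hx, fun hh => hC2f C' h2 (by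
                  rwa [Set.mem_singleton_iff.1 hh] at hx)⟩
                exact hCsubM2 x (hsub hx') (h2.subset_ground hx)
              have hEq : C' = C2 := hC2.eq_of_subset h2 (hY.trans Set.diff_subset)
              have heC' : e ∈ C' := by rw [hEq]; exact heC2
              exact (hY heC').2 rfl
            · have hfC2' := hC2f C2' hC2'
              have hsub' : ((C1' \ {f}) ∪ C2') \ {e} ⊆ (D1 ∪ C2) \ {e} := by
                rw [← set_identity1 hfC2']
                exact hsub
              have hC2'sub : C2' ⊆ C2 := by
                intro x hx
                by_cases hxe : x = e
                · exact hxe ▸ heC2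
                · exact (hCsubM2 x (hsub' ⟨Or.inr hx,
                    fun hh => hxe (Set.mem_singleton_iff.1 hh)⟩)
                    (hC2'.subset_ground hx)).1
              have hC2eq : C2' = C2 := hC2.eq_of_subset hC2' hC2'sub
              have hC1'sub : C1' \ {f} ⊆ D1 := by
                intro x hx
                by_cases hxe : x = e
                · exact hxe ▸ heD1
                · exact (hCsubM1 x (hsub' ⟨Or.inl hx,
                    fun hh => hxe (Set.mem_singleton_iff.1 hh)⟩)
                    (hC1'.subset_ground hx.1)).1
              have hD1eq' : D1 = C1' \ {f} := hmin1 C1' hC1' hC1'sub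
              rw [set_identity1 hfC2', ← hD1eq', hC2eq]

end

end SPPaper
end

section
/- Let M1, M2 be matroids on ground sets E1, E2 with E1 ∩ E2 = {e}, e neither a loop nor a coloop of either, and suppose |E1| ≥ 2 and |E2| ≥ 2. Then the parallel connection P(M1,M2) is connected if and only if both M1 and M2 are connected. -/
open Polynomial

namespace SPPaper

noncomputable section
open Classical

universe u
variable {α : Type u} {V : Type u}

section Aux

open Set

/-- Every dependent set contains a circuit (via the fundamental circuit construction). -/
lemma dep_exists_circuit_subset {M : Matroid α} {D : Set α} (hD : M.Dep D) :
    ∃ C, C ⊆ D ∧ IsCircuit M C := by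
  obtain ⟨I, hI⟩ := M.exists_isBasis D hD.subset_ground
  obtain ⟨e, heD, heI⟩ : ∃ e, e ∈ D ∧ e ∉ I := by
    by_contra h
    push_neg at h
    exact hD.not_indep (hI.indep.subset h)
  have hIind := hI.indep
  have hecl : e ∈ M.closure I := hI.subset_closure heD
  set Js : Set (Set α) := {J | J ⊆ I ∧ e ∈ M.closure J} with hJsdef
  have hIJs : I ∈ Js := ⟨subset_rfl, hecl⟩
  have hne : Js.Nonempty := ⟨I, hIJs⟩
  set J0 := ⋂₀ Js with hJ0def
  have hJ0I : J0 ⊆ I := sInter_subset_of_mem hIJs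
  have hJ0ind : M.Indep J0 := hIind.subset hJ0I
  have hecl0 : e ∈ M.closure J0 := by
    rw [hJ0def, hIind.closure_sInter_eq_biInter_closure_of_forall_subset hne (fun J hJ => hJ.1)]
    exact mem_iInter₂.mpr fun J hJ => hJ.2
  have heJ0 : e ∉ J0 := fun h => heI (hJ0I h)
  refine ⟨insert e J0, insert_subset heD (hJ0I.trans hI.subset), ?_, ?_⟩
  · exact hJ0ind.insert_dep_iff.mpr ⟨hecl0, heJ0⟩
  · intro D' hD'
    by_cases heD' : e ∈ D'
    · have hD'' : D' \ {e} ⊆ J0 := by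
        intro x hx
        rcases mem_insert_iff.1 (hD'.1 hx.1) with h | h
        · exact absurd h hx.2
        · exact h
      obtain ⟨x, hxC, hxD'⟩ := exists_of_ssubset hD'
      have hxe : x ≠ e := fun h => hxD' (h ▸ heD')
      have hxJ0 : x ∈ J0 := by
        rcases mem_insert_iff.1 hxC with h | h
        · exact absurd h hxe
        · exact h
      have hnecl : e ∉ M.closure (D' \ {e}) := by
        intro h
        have hsub : J0 ⊆ D' \ {e} := sInter_subset_of_mem ⟨hD''.trans hJ0I, h⟩
        exact hxD' (hsub hxJ0).1
      have hind : M.Indep (insert e (D' \ {e})) := by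
        rw [(hJ0ind.subset hD'').insert_indep_iff_of_notMem (fun h => h.2 rfl)]
        exact ⟨M.mem_ground_of_mem_closure hecl0, hnecl⟩
      rwa [insert_diff_singleton, insert_eq_of_mem heD'] at hind
    · refine hJ0ind.subset fun x hx => ?_
      rcases mem_insert_iff.1 (hD'.1 hx) with h | h
      · exact absurd (h ▸ hx) heD'
      · exact h

lemma circuit_subset_of_dep_inter {M : Matroid α} {C X : Set α} (hC : IsCircuit M C)
    (hX : M.Dep (C ∩ X)) : C ⊆ X := by
  by_contra h
  have hne : C ∩ X ≠ C := fun hEq => h fun y hy => ((hEq.symm ▸ hy : y ∈ C ∩ X)).2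
  exact hX.not_indep (hC.2 _ ((inter_subset_left).ssubset_of_ne hne))

/-- Every circuit of a disjoint sum lies inside one of the two parts. -/
lemma disjointSum_circuit_subset {N1 N2 : Matroid α} {h : Disjoint N1.E N2.E} {C : Set α}
    (hC : IsCircuit (Matroid.disjointSum N1 N2 h) C) : C ⊆ N1.E ∨ C ⊆ N2.E := by
  have hCE : C ⊆ N1.E ∪ N2.E := by
    have := hC.1.subset_ground; rwa [Matroid.disjointSum_ground_eq] at this
  have hni := hC.1.not_indep
  rw [Matroid.disjointSum_indep_iff] at hni
  push_neg at hni
  by_cases h1 : N1.Indep (C ∩ N1.E)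
  · have h2 : ¬ N2.Indep (C ∩ N2.E) := fun hh => hni h1 hh hCE
    refine Or.inr (circuit_subset_of_dep_inter hC ⟨?_, ?_⟩)
    · rw [Matroid.disjointSum_indep_iff]
      rintro ⟨-, hB, -⟩
      rw [inter_assoc, inter_self] at hB
      exact h2 hB
    · rw [Matroid.disjointSum_ground_eq]
      exact fun x hx => Or.inr hx.2
  · refine Or.inl (circuit_subset_of_dep_inter hC ⟨?_, ?_⟩)
    · rw [Matroid.disjointSum_indep_iff]
      rintro ⟨hA, -, -⟩
      rw [inter_assoc, inter_self] at hA
      exact h1 hA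
    · rw [Matroid.disjointSum_ground_eq]
      exact fun x hx => Or.inl hx.2

/-- If every circuit of `M` lies inside `A` or inside `B`, where `A, B` partition the
ground set, then `M` is the direct sum of its restrictions to `A` and `B`. -/
lemma isDirSumOf_restrict {M : Matroid α} {A B : Set α} (hU : A ∪ B = M.E) (hd : Disjoint A B)
    (hC : ∀ C, IsCircuit M C → C ⊆ A ∨ C ⊆ B) :
    IsDirSumOf M (M.restrict A) (M.restrict B) := by
  have hdisj : Disjoint (M.restrict A).E (M.restrict B).E := by simpa using hd
  refine ⟨hdisj, Matroid.ext_indep (by simp [hU]) fun I hIE => ?_⟩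
  rw [Matroid.disjointSum_indep_iff]
  simp only [Matroid.restrict_ground_eq, Matroid.restrict_indep_iff]
  constructor
  · intro hI
    exact ⟨⟨hI.subset inter_subset_left, inter_subset_right⟩,
      ⟨hI.subset inter_subset_left, inter_subset_right⟩, by rwa [hU]⟩
  · rintro ⟨⟨hA, -⟩, ⟨hB, -⟩, -⟩
    by_contra hni
    obtain ⟨C, hCI, hCc⟩ := dep_exists_circuit_subset (M := M) ⟨hni, hIE⟩
    rcases hC C hCc with hsub | hsub
    · exact hCc.1.not_indep (hA.subset fun x hx => ⟨hCI hx, hsub hx⟩)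
    · exact hCc.1.not_indep (hB.subset fun x hx => ⟨hCI hx, hsub hx⟩)

lemma not_connected_of_sep {M : Matroid α} {A B : Set α} (hU : A ∪ B = M.E) (hd : Disjoint A B)
    (hA : A.Nonempty) (hB : B.Nonempty)
    (hC : ∀ C, IsCircuit M C → C ⊆ A ∨ C ⊆ B) : ¬ Connected M := by
  rintro ⟨-, hcon⟩
  exact hcon ⟨M.restrict A, M.restrict B, by simpa using hA, by simpa using hB,
    isDirSumOf_restrict hU hd hC⟩

/-- Lifting a separation of `M1` (with `e` on the `A` side) to a separation of the
parallel connection. -/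
lemma aux_fwd' {M1 M2 P : Matroid α} {e : α} {A B : Set α} (hE : M1.E ∩ M2.E = {e})
    (hPE : P.E = M1.E ∪ M2.E) (hPcirc : ∀ C, IsCircuit P C ↔ PConnCircuit M1 M2 e C)
    (hU : A ∪ B = M1.E) (hd : Disjoint A B) (hA : A.Nonempty) (hB : B.Nonempty)
    (heA : e ∈ A)
    (hsides : ∀ C, IsCircuit M1 C → C ⊆ A ∨ C ⊆ B) : ¬ Connected P := by
  refine not_connected_of_sep (A := A ∪ M2.E) (B := B) ?_ ?_
    (hA.mono subset_union_left) hB ?_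
  · rw [hPE, ← hU, union_right_comm]
  · refine disjoint_union_left.mpr ⟨hd, ?_⟩
    rw [disjoint_left]
    intro x hx2 hxB
    have hx1 : x ∈ M1.E := hU ▸ Or.inr hxB
    have hxe : x ∈ ({e} : Set α) := hE ▸ ⟨hx1, hx2⟩
    rw [mem_singleton_iff] at hxe; subst hxe
    exact (disjoint_left.mp hd heA) hxB
  · intro C hC
    rcases (hPcirc C).mp hC with h1 | h2 | ⟨C1, C2, hC1, hC2, heC1, heC2, rfl⟩
    · rcases hsides C h1 with h | h
      · exact Or.inl (h.trans subset_union_left)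
      · exact Or.inr h
    · exact Or.inl (h2.1.subset_ground.trans subset_union_right)
    · left
      have hC1A : C1 ⊆ A := by
        rcases hsides C1 hC1 with h | h
        · exact h
        · exact absurd (h heC1) (disjoint_left.mp hd heA)
      intro x hx
      rcases hx.1 with h | h
      · exact Or.inl (hC1A h)
      · exact Or.inr (hC2.1.subset_ground h)

lemma aux_fwd {M1 M2 P : Matroid α} {e : α} (hE : M1.E ∩ M2.E = {e})
    (hPE : P.E = M1.E ∪ M2.E) (hPcirc : ∀ C, IsCircuit P C ↔ PConnCircuit M1 M2 e C)
    (hnc : ¬ Connected M1) (hne1 : M1.E.Nonempty) : ¬ Connected P := by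
  have he12 : e ∈ M1.E ∩ M2.E := by rw [hE]; exact rfl
  have hdec : ∃ N1 N2 : Matroid α, N1.E.Nonempty ∧ N2.E.Nonempty ∧ IsDirSumOf M1 N1 N2 := by
    by_contra h
    exact hnc ⟨hne1, h⟩
  obtain ⟨N1, N2, hN1, hN2, hd, hMeq⟩ := hdec
  have hsides : ∀ C, IsCircuit M1 C → C ⊆ N1.E ∨ C ⊆ N2.E := by
    intro C hC
    rw [hMeq] at hC
    exact disjointSum_circuit_subset hC
  have hU : N1.E ∪ N2.E = M1.E := by rw [hMeq, Matroid.disjointSum_ground_eq]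
  have heU : e ∈ N1.E ∪ N2.E := hU.symm ▸ he12.1
  rcases heU with hA | hB
  · exact aux_fwd' hE hPE hPcirc hU hd hN1 hN2 hA hsides
  · exact aux_fwd' hE hPE hPcirc (by rw [union_comm]; exact hU) hd.symm hN2 hN1 hB
      (fun C hC => (hsides C hC).symm)

lemma aux_bwd1 {M P : Matroid α} {A B : Set α} {e f : α}
    (hcirc : ∀ C, IsCircuit M C → IsCircuit P C)
    (hconn : Connected M) (hd : Disjoint A B)
    (hME : M.E ⊆ A ∪ B) (heA : e ∈ A) (heM : e ∈ M.E) (hfB : f ∈ B) (hfM : f ∈ M.E)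
    (hsides : ∀ C, IsCircuit P C → C ⊆ A ∨ C ⊆ B) : False := by
  by_cases hall : ∀ C, IsCircuit M C → C ⊆ A ∩ M.E ∨ C ⊆ B ∩ M.E
  · refine not_connected_of_sep ?_ (hd.mono inter_subset_left inter_subset_left)
      ⟨e, heA, heM⟩ ⟨f, hfB, hfM⟩ hall hconn
    rw [← union_inter_distrib_right]
    exact inter_eq_right.mpr hME
  · push_neg at hall
    obtain ⟨C, hCc, hnA, hnB⟩ := hall
    have hCE := hCc.1.subset_ground
    rcases hsides C (hcirc C hCc) with h | h
    · exact hnA (subset_inter h hCE)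
    · exact hnB (subset_inter h hCE)

lemma aux_bwd {M1 M2 P : Matroid α} {e : α} {A B : Set α} (hE : M1.E ∩ M2.E = {e})
    (hPE : P.E = M1.E ∪ M2.E) (hPcirc : ∀ C, IsCircuit P C ↔ PConnCircuit M1 M2 e C)
    (h1 : Connected M1) (h2 : Connected M2)
    (hU : A ∪ B = P.E) (hd : Disjoint A B) (heA : e ∈ A) (hB : B.Nonempty)
    (hsides : ∀ C, IsCircuit P C → C ⊆ A ∨ C ⊆ B) : False := by
  have he12 : e ∈ M1.E ∩ M2.E := by rw [hE]; exact rfl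
  obtain ⟨f, hfB⟩ := hB
  have hfE : f ∈ M1.E ∪ M2.E := by
    rw [← hPE, ← hU]; exact Or.inr hfB
  have hME1 : M1.E ⊆ A ∪ B := by
    rw [hU, hPE]; exact subset_union_left
  have hME2 : M2.E ⊆ A ∪ B := by
    rw [hU, hPE]; exact subset_union_right
  rcases hfE with hf1 | hf2
  · exact aux_bwd1 (fun C hC => (hPcirc C).mpr (Or.inl hC)) h1 hd hME1 heA he12.1 hfB hf1 hsides
  · exact aux_bwd1 (fun C hC => (hPcirc C).mpr (Or.inr (Or.inl hC))) h2 hd hME2 heA he12.2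
      hfB hf2 hsides

end Aux

/-- if `|E1|, |E2| ≥ 2` then `P(M1,M2)` is connected iff both `M1` and
`M2` are connected. -/
theorem stmt7 (M1 M2 P : Matroid α) (e : α)
    (hE : M1.E ∩ M2.E = {e})
    (hl1 : ¬ IsLoop M1 e) (hc1 : ¬ IsColoop M1 e)
    (hl2 : ¬ IsLoop M2 e) (hc2 : ¬ IsColoop M2 e)
    (hP : IsParallelConn P M1 M2 e)
    (hnt1 : M1.E.Nontrivial) (hnt2 : M2.E.Nontrivial) :
    Connected P ↔ Connected M1 ∧ Connected M2 := by
  have he12 : e ∈ M1.E ∩ M2.E := by rw [hE]; exact rfl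
  unfold IsParallelConn at hP
  rw [if_neg hl1, if_neg hc1, if_neg hl2, if_neg hc2] at hP
  obtain ⟨hPE, hPcirc⟩ := hP
  have psymm : ∀ (Ma Mb : Matroid α) (C : Set α),
      PConnCircuit Ma Mb e C → PConnCircuit Mb Ma e C := by
    rintro Ma Mb C (h | h | ⟨C1, C2, h1, h2, he1, he2, rfl⟩)
    · exact Or.inr (Or.inl h)
    · exact Or.inl h
    · exact Or.inr (Or.inr ⟨C2, C1, h2, h1, he2, he1, by rw [Set.union_comm]⟩)
  have hPcirc' : ∀ C, IsCircuit P C ↔ PConnCircuit M2 M1 e C :=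
    fun C => (hPcirc C).trans ⟨psymm _ _ _, psymm _ _ _⟩
  have hE' : M2.E ∩ M1.E = {e} := by rw [Set.inter_comm]; exact hE
  have hPE' : P.E = M2.E ∪ M1.E := by rw [Set.union_comm]; exact hPE
  constructor
  · intro hPconn
    constructor
    · by_contra hnc
      exact aux_fwd hE hPE hPcirc hnc hnt1.nonempty hPconn
    · by_contra hnc
      exact aux_fwd hE' hPE' hPcirc' hnc hnt2.nonempty hPconn
  · rintro ⟨h1, h2⟩
    refine ⟨?_, ?_⟩
    · rw [hPE]
      exact hnt1.nonempty.mono Set.subset_union_left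
    · rintro ⟨N1, N2, hN1, hN2, hd, hPeq⟩
      have hU : N1.E ∪ N2.E = P.E := by rw [hPeq, Matroid.disjointSum_ground_eq]
      have hsides : ∀ C, IsCircuit P C → C ⊆ N1.E ∨ C ⊆ N2.E := by
        intro C hC
        rw [hPeq] at hC
        exact disjointSum_circuit_subset hC
      have heP : e ∈ N1.E ∪ N2.E := by
        rw [hU, hPE]; exact Or.inl he12.1
      rcases heP with hA | hBe
      · exact aux_bwd hE hPE hPcirc h1 h2 hU hd hA hN2 hsides
      · exact aux_bwd hE hPE hPcirc h1 h2 (by rw [Set.union_comm]; exact hU) hd.symm hBe hN1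
          (fun C hC => (hsides C hC).symm)

end

end SPPaper
end
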